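/- Let K be a field and let R be an affine K-algebra without zero divisors that is NOT amenable. Then there exist a finite-dimensional K-linear subspace Z ⊆ R and a real number ε > 0 such that for every nonzero finite-dimensional K-linear subspace V ⊆ R one has dim_K(V·Z + V) > (1 + ε)·dim_K(V), where V·Z denotes the K-linear span of all products vz with v ∈ V, z ∈ Z. -/
import Mathlib

open Filter Module

/-- `W·r`: the image of the finite dimensional subspace `W` under right multiplication
by `r`. -/
noncomputable def rightMulSubmodule (K : Type*) [Field K] {R : Type*} [Ring R] [Algebra K R]
    (W : Submodule K R) (r : R) : Submodule K R :=
  W.map (LinearMap.mulRight K r)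

/-- A Følner exhaustion of a `K`-algebra `R`: an increasing sequence of finite dimensional
subspaces exhausting `R` such that for every `r ∈ R`,
`dim (Wₙ·r + Wₙ) / dim Wₙ → 1`. -/
def FolnerExhaustion (K : Type*) [Field K] (R : Type*) [Ring R] [Algebra K R]
    (W : ℕ → Submodule K R) : Prop :=
  Monotone W ∧ (∀ n, FiniteDimensional K (W n)) ∧ (∀ x : R, ∃ n, x ∈ W n) ∧
    ∀ r : R,
      Tendsto (fun n => (finrank K ↥(rightMulSubmodule K (W n) r ⊔ W n) : ℝ) / finrank K (W n))
        atTop (nhds 1)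

/-- An affine algebra is (left) amenable if it admits a Følner exhaustion. -/
def AmenableAlgebra (K : Type*) [Field K] (R : Type*) [Ring R] [Algebra K R] : Prop :=
  ∃ W : ℕ → Submodule K R, FolnerExhaustion K R W

section Aux

variable {K : Type*} [Field K] {R : Type*} [Ring R] [Algebra K R]

lemma aux_finrank_sup_le (s t : Submodule K R) [FiniteDimensional K s]
    [FiniteDimensional K t] :
    finrank K ↥(s ⊔ t) ≤ finrank K s + finrank K t := by
  have h := Submodule.finrank_sup_add_finrank_inf_eq s t
  omega

lemma amenable_of_finiteDimensional [Nontrivial R] [FiniteDimensional K R] :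
    AmenableAlgebra K R := by
  refine ⟨fun _ => ⊤, monotone_const, fun _ => inferInstance, fun x => ⟨0, trivial⟩, fun r => ?_⟩
  have h : ((finrank K ↥(rightMulSubmodule K (⊤ : Submodule K R) r ⊔ ⊤) : ℝ) /
      finrank K ↥(⊤ : Submodule K R)) = 1 := by
    rw [sup_top_eq, finrank_top]
    have : (0:ℝ) < finrank K R := by
      exact_mod_cast finrank_pos
    exact div_self (ne_of_gt this)
  have heq : (fun _ : ℕ => ((finrank K ↥(rightMulSubmodule K (⊤ : Submodule K R) r ⊔ ⊤) : ℝ) /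
      finrank K ↥(⊤ : Submodule K R))) = fun _ : ℕ => (1:ℝ) := funext fun _ => h
  exact heq ▸ tendsto_const_nhds

end Aux

/-- If an affine algebra without zero divisors is not amenable, then there is a finite
dimensional subspace `Z` and `ε > 0` such that `dim (V·Z + V) > (1+ε)·dim V` for every nonzero
finite dimensional subspace `V`. -/
theorem nonamenable_expansion (K : Type*) [Field K] (R : Type*) [Ring R] [Algebra K R]
    [Algebra.FiniteType K R] [NoZeroDivisors R]
    (hR : ¬ AmenableAlgebra K R) :
    ∃ (Z : Submodule K R) (ε : ℝ), FiniteDimensional K Z ∧ 0 < ε ∧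
      ∀ V : Submodule K R, FiniteDimensional K V → V ≠ ⊥ →
        (1 + ε) * finrank K V < (finrank K ↥(V * Z ⊔ V) : ℝ) := by
  rcases subsingleton_or_nontrivial R with hsub | hnt
  · exact ⟨⊥, 1, inferInstance, one_pos,
      fun V _ hV => absurd (Subsingleton.elim V ⊥) hV⟩
  -- R is nontrivial from now on
  have hfinR : ¬ FiniteDimensional K R := fun h => hR amenable_of_finiteDimensional
  -- generators
  obtain ⟨s, hs⟩ : ∃ t : Finset R, Algebra.adjoin K (↑t : Set R) = ⊤ :=
    Algebra.FiniteType.out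
  set S : Submodule K R := Submodule.span K (insert 1 (↑s : Set R)) with hSdef
  have h1S : (1 : R) ∈ S := Submodule.subset_span (Set.mem_insert _ _)
  have hone : (1 : Submodule K R) ≤ S := Submodule.one_le.2 h1S
  have hSfg : S.FG := Submodule.fg_span ((s.finite_toSet).insert 1)
  have hpowfg : ∀ n, (S ^ n).FG := by
    intro n
    induction n with
    | zero => rw [pow_zero, Submodule.one_eq_span]; exact Submodule.fg_span_singleton 1
    | succ n ih => rw [pow_succ]; exact ih.mul hSfg
  have hpowfd : ∀ n, FiniteDimensional K ↥(S ^ n) :=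
    fun n => (Submodule.fg_iff_finiteDimensional _).1 (hpowfg n)
  have hone_pow : ∀ n, (1 : Submodule K R) ≤ S ^ n := by
    intro n
    induction n with
    | zero => rw [pow_zero]
    | succ n ih =>
      rw [pow_succ]
      calc (1 : Submodule K R) = 1 * 1 := (one_mul 1).symm
        _ ≤ S ^ n * S := mul_le_mul' ih hone
  have hpow_le : ∀ {m n : ℕ}, m ≤ n → S ^ m ≤ S ^ n := by
    intro m n hmn
    calc S ^ m = S ^ m * 1 := (mul_one _).symm
      _ ≤ S ^ m * S ^ (n - m) := mul_le_mul' le_rfl (hone_pow _)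
      _ = S ^ n := by rw [← pow_add, Nat.add_sub_cancel' hmn]
  -- exhaustion by powers of S
  have hexh : ∀ x : R, ∃ n, x ∈ S ^ n := by
    intro x
    have hdir : Directed (· ≤ ·) (fun n : ℕ => S ^ n) :=
      fun m n => ⟨max m n, hpow_le (le_max_left _ _), hpow_le (le_max_right _ _)⟩
    have hx : x ∈ Subalgebra.toSubmodule (Algebra.adjoin K (↑s : Set R)) := by
      rw [hs]; trivial
    rw [Algebra.adjoin_eq_span] at hx
    have hsubset : (↑(Submonoid.closure (↑s : Set R)) : Set R) ⊆ ↑(⨆ n, S ^ n) := by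
      intro y hy
      induction hy using Submonoid.closure_induction with
      | mem z hz =>
        have : z ∈ S := Submodule.subset_span (Set.mem_insert_of_mem _ hz)
        have : z ∈ S ^ 1 := by rwa [pow_one]
        exact (Submodule.mem_iSup_of_directed _ hdir).2 ⟨1, this⟩
      | one =>
        have : (1:R) ∈ S ^ 0 := by
          rw [pow_zero, Submodule.one_eq_span]
          exact Submodule.mem_span_singleton_self 1
        exact (Submodule.mem_iSup_of_directed _ hdir).2 ⟨0, this⟩
      | mul a b _ _ ha hb =>
        obtain ⟨p, hp⟩ := (Submodule.mem_iSup_of_directed _ hdir).1 ha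
        obtain ⟨q, hq⟩ := (Submodule.mem_iSup_of_directed _ hdir).1 hb
        have : a * b ∈ S ^ (p + q) := by
          rw [pow_add]; exact Submodule.mul_mem_mul hp hq
        exact (Submodule.mem_iSup_of_directed _ hdir).2 ⟨p + q, this⟩
    have := Submodule.span_le.2 hsubset hx
    exact (Submodule.mem_iSup_of_directed _ hdir).1 this
  -- no nonzero finite-dimensional right ideal
  have hideal : ∀ U : Submodule K R, FiniteDimensional K U → U ≠ ⊥ → U * S ≤ U → False := by
    intro U hUfd hUne hUS
    have hUn : ∀ n, U * S ^ n ≤ U := by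
      intro n
      induction n with
      | zero => rw [pow_zero, mul_one]
      | succ n ih =>
        rw [pow_succ, ← mul_assoc]
        exact le_trans (mul_le_mul' ih le_rfl) hUS
    obtain ⟨v, hv, hv0⟩ := Submodule.exists_mem_ne_zero_of_ne_bot hUne
    have hmem : ∀ r : R, LinearMap.mulLeft K v r ∈ U := by
      intro r
      obtain ⟨n, hn⟩ := hexh r
      exact hUn n (Submodule.mul_mem_mul hv hn)
    let f : R →ₗ[K] U := LinearMap.codRestrict U (LinearMap.mulLeft K v) hmem
    have hinj : Function.Injective f := by
      intro a b hab
      have : v * a = v * b := congrArg Subtype.val hab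
      exact mul_left_cancel₀ hv0 this
    exact hfinR (FiniteDimensional.of_injective f hinj)
  -- contradiction setup
  by_contra hcon
  push_neg at hcon
  apply hR
  -- hcon : ∀ Z ε, FD Z → 0 < ε → ∃ V, FD V ∧ V ≠ ⊥ ∧ finrank (V*Z ⊔ V) ≤ (1+ε) * finrank V
  -- Key lemma: Følner sets of arbitrarily large dimension
  have key : ∀ ε : ℝ, 0 < ε → ∀ N : ℕ, ∃ W : Submodule K R,
      FiniteDimensional K W ∧ W ≠ ⊥ ∧ N ≤ finrank K W ∧
      (finrank K ↥(W * S ^ N ⊔ W) : ℝ) ≤ (1 + ε) * finrank K W := by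
    intro ε hε N
    obtain ⟨V, hVfd, hVne, hVle⟩ := hcon (S ^ (N + N)) ε (hpowfd _) hε
    have hVfg : V.FG := (Submodule.fg_iff_finiteDimensional V).2 hVfd
    have hUfd : ∀ j, FiniteDimensional K ↥(V * S ^ j) :=
      fun j => (Submodule.fg_iff_finiteDimensional _).1 (hVfg.mul (hpowfg j))
    have hVleU : ∀ j, V ≤ V * S ^ j := by
      intro j
      calc V = V * 1 := (mul_one V).symm
        _ ≤ V * S ^ j := mul_le_mul' le_rfl (hone_pow j)
    have hUle : ∀ j, V * S ^ j ≤ V * S ^ (j + 1) :=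
      fun j => mul_le_mul' le_rfl (hpow_le (Nat.le_succ j))
    by_cases hstab : ∃ j, V * S ^ (j + 1) ≤ V * S ^ j
    · obtain ⟨j, hj⟩ := hstab
      exfalso
      refine hideal (V * S ^ j) (hUfd j) ?_ ?_
      · intro h
        exact hVne (le_bot_iff.1 (h ▸ hVleU j))
      · calc V * S ^ j * S = V * S ^ (j + 1) := by rw [mul_assoc, ← pow_succ]
          _ ≤ V * S ^ j := hj
    · push_neg at hstab
      have hlt : ∀ j, V * S ^ j < V * S ^ (j + 1) :=
        fun j => lt_of_le_of_ne (hUle j) (fun h => hstab j h.ge)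
      have hrank : ∀ j, j ≤ finrank K ↥(V * S ^ j) := by
        intro j
        induction j with
        | zero => exact Nat.zero_le _
        | succ j ih =>
          have := @Submodule.finrank_lt_finrank_of_lt K R _ _ _ _ _ (hUfd (j+1)) (hlt j)
          omega
      refine ⟨V * S ^ N, hUfd N, ?_, hrank N, ?_⟩
      · intro h
        exact hVne (le_bot_iff.1 (h ▸ hVleU N))
      · have heq : V * S ^ N * S ^ N ⊔ (V * S ^ N) = V * S ^ (N + N) := by
          rw [mul_assoc, ← pow_add]
          exact sup_eq_left.2 (mul_le_mul' le_rfl (hpow_le (Nat.le_add_right N N)))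
        rw [heq]
        have h1 : V * S ^ (N + N) ⊔ V = V * S ^ (N + N) := sup_eq_left.2 (hVleU _)
        rw [h1] at hVle
        have h2 : finrank K V ≤ finrank K ↥(V * S ^ N) :=
          haveI := hUfd N
          Submodule.finrank_mono (hVleU N)
        calc (finrank K ↥(V * S ^ (N + N)) : ℝ) ≤ (1 + ε) * finrank K V := hVle
          _ ≤ (1 + ε) * finrank K ↥(V * S ^ N) := by
            apply mul_le_mul_of_nonneg_left (by exact_mod_cast h2)
            linarith
  -- choose the Følner sets
  have hεpos : ∀ n : ℕ, (0:ℝ) < 1 / (n + 1) := fun n => by positivity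
  have hpick := fun (n : ℕ) (P : Submodule K R) =>
    key (1 / ((n:ℝ) + 1)) (hεpos n) (max (n + 1) ((n + 1) * (finrank K P + 1)))
  choose pick hp1 hp2 hp3 hp4 using hpick
  set W : ℕ → Submodule K R :=
    fun n => Nat.rec ⊥ (fun k P => (P ⊔ S ^ (k + 1)) ⊔ pick k (P ⊔ S ^ (k + 1))) n with hWdef
  have hWsucc : ∀ n, W (n + 1) = (W n ⊔ S ^ (n + 1)) ⊔ pick n (W n ⊔ S ^ (n + 1)) :=
    fun n => rfl
  have hWfd : ∀ n, FiniteDimensional K (W n) := by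
    intro n
    induction n with
    | zero => exact (inferInstance : FiniteDimensional K (⊥ : Submodule K R))
    | succ n ih =>
      rw [hWsucc]
      haveI := ih
      haveI := hpowfd (n + 1)
      haveI := Submodule.finiteDimensional_sup (W n) (S ^ (n + 1))
      haveI := hp1 n (W n ⊔ S ^ (n + 1))
      exact Submodule.finiteDimensional_sup _ _
  have hmono : Monotone W := by
    apply monotone_nat_of_le_succ
    intro n
    rw [hWsucc]
    exact le_sup_of_le_left le_sup_left
  have hexhW : ∀ x : R, ∃ n, x ∈ W n := by
    intro x
    obtain ⟨n, hn⟩ := hexh x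
    refine ⟨n + 1, ?_⟩
    have : S ^ n ≤ W (n + 1) := by
      rw [hWsucc]
      exact le_sup_of_le_left (le_sup_of_le_right (hpow_le (Nat.le_succ n)))
    exact this hn
  refine ⟨W, hmono, hWfd, hexhW, ?_⟩
  intro r
  obtain ⟨m, hm⟩ := hexh r
  -- lower bound: 1 ≤ ratio for n ≥ 1
  have hWne : ∀ n, W (n + 1) ≠ ⊥ := by
    intro n h
    apply hp2 n (W n ⊔ S ^ (n + 1))
    have : pick n (W n ⊔ S ^ (n + 1)) ≤ W (n + 1) := by rw [hWsucc]; exact le_sup_right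
    exact le_bot_iff.1 (h ▸ this)
  have hWpos : ∀ n, (0:ℝ) < finrank K (W (n + 1)) := by
    intro n
    haveI := hWfd (n + 1)
    haveI : Nontrivial ↥(W (n + 1)) := Submodule.nontrivial_iff_ne_bot.2 (hWne n)
    exact_mod_cast finrank_pos
  have hfd_sup : ∀ n, FiniteDimensional K ↥(rightMulSubmodule K (W n) r ⊔ W n) := by
    intro n
    haveI := hWfd n
    haveI : FiniteDimensional K ↥(rightMulSubmodule K (W n) r) :=
      Module.Finite.map (W n) (LinearMap.mulRight K r)
    exact Submodule.finiteDimensional_sup _ _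
  have hlow : ∀ n : ℕ, 1 ≤ (finrank K ↥(rightMulSubmodule K (W (n+1)) r ⊔ W (n+1)) : ℝ) /
      finrank K (W (n+1)) := by
    intro n
    rw [one_le_div (hWpos n)]
    haveI := hfd_sup (n + 1)
    exact_mod_cast Submodule.finrank_mono (le_sup_right :
      W (n+1) ≤ rightMulSubmodule K (W (n+1)) r ⊔ W (n+1))
  -- upper bound
  have hup : ∀ n : ℕ, m ≤ n + 1 →
      (finrank K ↥(rightMulSubmodule K (W (n+1)) r ⊔ W (n+1)) : ℝ) / finrank K (W (n+1)) ≤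
        1 + 3 / (n + 1) := by
    intro n hmn
    set P := W n ⊔ S ^ (n + 1) with hP
    set G := pick n P with hG
    set Nn := max (n + 1) ((n + 1) * (finrank K P + 1)) with hNn
    haveI hPfd : FiniteDimensional K P := by
      haveI := hWfd n; haveI := hpowfd (n + 1)
      exact Submodule.finiteDimensional_sup _ _
    haveI hGfd : FiniteDimensional K G := hp1 n P
    have hWn1 : W (n + 1) = P ⊔ G := hWsucc n
    haveI hGSfd : FiniteDimensional K ↥(G * S ^ Nn) :=
      (Submodule.fg_iff_finiteDimensional _).1
        (((Submodule.fg_iff_finiteDimensional G).2 hGfd).mul (hpowfg Nn))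
    haveI : FiniteDimensional K ↥(G * S ^ Nn ⊔ G) := Submodule.finiteDimensional_sup _ _
    haveI : FiniteDimensional K ↥(P.map (LinearMap.mulRight K r)) :=
      Module.Finite.map P (LinearMap.mulRight K r)
    haveI : FiniteDimensional K ↥(P.map (LinearMap.mulRight K r) ⊔ P) :=
      Submodule.finiteDimensional_sup _ _
    -- containment
    have hcont : rightMulSubmodule K (W (n+1)) r ⊔ W (n+1) ≤
        (G * S ^ Nn ⊔ G) ⊔ (P.map (LinearMap.mulRight K r) ⊔ P) := by
      rw [hWn1]
      unfold rightMulSubmodule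
      rw [Submodule.map_sup]
      have hGmap : G.map (LinearMap.mulRight K r) ≤ G * S ^ Nn := by
        rintro x ⟨g, hg, rfl⟩
        have hrN : r ∈ S ^ Nn := hpow_le (le_trans hmn (le_max_left _ _)) hm
        exact Submodule.mul_mem_mul hg hrN
      refine sup_le (sup_le ?_ ?_) (sup_le ?_ ?_)
      · exact le_sup_of_le_right le_sup_left
      · exact le_trans hGmap (le_sup_of_le_left le_sup_left)
      · exact le_sup_of_le_right le_sup_right
      · exact le_sup_of_le_left le_sup_right
    -- dimension bounds
    have hdim1 : finrank K ↥(rightMulSubmodule K (W (n+1)) r ⊔ W (n+1)) ≤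
        finrank K ↥(G * S ^ Nn ⊔ G) + (finrank K ↥(P.map (LinearMap.mulRight K r)) +
          finrank K P) := by
      haveI : FiniteDimensional K ↥((G * S ^ Nn ⊔ G) ⊔ (P.map (LinearMap.mulRight K r) ⊔ P)) :=
        Submodule.finiteDimensional_sup _ _
      calc finrank K ↥(rightMulSubmodule K (W (n+1)) r ⊔ W (n+1)) ≤
          finrank K ↥((G * S ^ Nn ⊔ G) ⊔ (P.map (LinearMap.mulRight K r) ⊔ P)) :=
            Submodule.finrank_mono hcont
        _ ≤ finrank K ↥(G * S ^ Nn ⊔ G) + finrank K ↥(P.map (LinearMap.mulRight K r) ⊔ P) :=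
            aux_finrank_sup_le _ _
        _ ≤ _ := by
            have := aux_finrank_sup_le (P.map (LinearMap.mulRight K r)) P
            omega
    have hmaple : finrank K ↥(P.map (LinearMap.mulRight K r)) ≤ finrank K P :=
      Submodule.finrank_map_le _ _
    have hGbig : ((n:ℝ) + 1) * (finrank K P + 1) ≤ finrank K G := by
      have h := le_trans (le_max_right _ _) (hp3 n P)
      have : ((n + 1) * (finrank K P + 1) : ℕ) ≤ (finrank K G : ℕ) := h
      exact_mod_cast this
    have hGW : (finrank K G : ℝ) ≤ finrank K (W (n+1)) := by
      haveI := hWfd (n + 1)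
      have : G ≤ W (n + 1) := by rw [hWn1]; exact le_sup_right
      exact_mod_cast Submodule.finrank_mono this
    have hGpos : (0:ℝ) < finrank K G := by
      haveI : Nontrivial ↥G := Submodule.nontrivial_iff_ne_bot.2 (hp2 n P)
      exact_mod_cast finrank_pos
    have hp4' : (finrank K ↥(G * S ^ Nn ⊔ G) : ℝ) ≤ (1 + 1/((n:ℝ)+1)) * finrank K G :=
      hp4 n P
    -- main estimate
    rw [div_le_iff₀ (hWpos n)]
    have hPG : (finrank K P : ℝ) ≤ finrank K G / ((n:ℝ)+1) := by
      rw [le_div_iff₀ (by positivity)]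
      nlinarith [hGbig]
    have hnum : (finrank K ↥(rightMulSubmodule K (W (n+1)) r ⊔ W (n+1)) : ℝ) ≤
        (1 + 3/((n:ℝ)+1)) * finrank K G := by
      have hd1 : (finrank K ↥(rightMulSubmodule K (W (n+1)) r ⊔ W (n+1)) : ℝ) ≤
          (finrank K ↥(G * S ^ Nn ⊔ G) : ℝ) + 2 * finrank K P := by
        have := hdim1
        have := hmaple
        push_cast
        have h1 : ((finrank K ↥(rightMulSubmodule K (W (n+1)) r ⊔ W (n+1)) : ℕ) : ℝ) ≤
            ((finrank K ↥(G * S ^ Nn ⊔ G) + (finrank K ↥(P.map (LinearMap.mulRight K r)) +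
              finrank K P) : ℕ) : ℝ) := by exact_mod_cast hdim1
        push_cast at h1
        have h2 : ((finrank K ↥(P.map (LinearMap.mulRight K r)) : ℕ) : ℝ) ≤ finrank K P := by
          exact_mod_cast hmaple
        linarith
      calc (finrank K ↥(rightMulSubmodule K (W (n+1)) r ⊔ W (n+1)) : ℝ) ≤
          (finrank K ↥(G * S ^ Nn ⊔ G) : ℝ) + 2 * finrank K P := hd1
        _ ≤ (1 + 1/((n:ℝ)+1)) * finrank K G + 2 * (finrank K G / ((n:ℝ)+1)) := by linarith
        _ = (1 + 3/((n:ℝ)+1)) * finrank K G := by field_simp; ring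
    calc (finrank K ↥(rightMulSubmodule K (W (n+1)) r ⊔ W (n+1)) : ℝ) ≤
        (1 + 3/((n:ℝ)+1)) * finrank K G := hnum
      _ ≤ (1 + 3/((n:ℝ)+1)) * finrank K (W (n+1)) := by
          apply mul_le_mul_of_nonneg_left hGW
          positivity
  -- squeeze
  have htop : Tendsto (fun n : ℕ => 1 + 3 / (n:ℝ)) atTop (nhds 1) := by
    have h3 : Tendsto (fun n : ℕ => 3 / (n:ℝ)) atTop (nhds 0) :=
      Tendsto.div_atTop tendsto_const_nhds tendsto_natCast_atTop_atTop
    have h4 := (tendsto_const_nhds (x := (1:ℝ)) (f := atTop (α := ℕ))).add h3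
    rw [add_zero] at h4
    exact h4
  apply tendsto_of_tendsto_of_tendsto_of_le_of_le'
    (tendsto_const_nhds (x := (1:ℝ))) htop
  · filter_upwards [eventually_ge_atTop 1] with k hk
    obtain ⟨n, rfl⟩ : ∃ n, k = n + 1 := ⟨k - 1, by omega⟩
    exact hlow n
  · filter_upwards [eventually_ge_atTop (m + 1)] with k hk
    obtain ⟨n, rfl⟩ : ∃ n, k = n + 1 := ⟨k - 1, by omega⟩
    have h := hup n (by omega)
    have he : (1:ℝ) + 3 / ((n:ℝ) + 1) = 1 + 3 / ((n + 1 : ℕ) : ℝ) := by push_cast; ring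
    rw [he] at h
    exact h
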